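/- In the Perfekt setup (without any density assumption), the restriction operator J : X* → E₀*, J(x*) = x*|_{E₀} (where elements of E₀ are regarded as elements of X), is a well-defined bounded linear operator with dense range in E₀* = (E₀, ‖·‖_∞)*. -/

import Mathlib

/-- A bounded continuous function vanishes at infinity if `{t | ε ≤ ‖f t‖}` is compact
for every `ε > 0`. -/
def ZeroAtInfty {L Y : Type*} [TopologicalSpace L] [NormedAddCommGroup Y]
    (f : BoundedContinuousFunction L Y) : Prop :=
  ∀ ε > (0 : ℝ), IsCompact {t : L | ε ≤ ‖f t‖}

/-- The subspace of `C_b(L, Y)` of functions vanishing at infinity, i.e. `C₀(L, Y)`. -/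
def zeroAtInftySubmodule (L Y : Type*) [TopologicalSpace L] [NormedAddCommGroup Y]
    [NormedSpace ℝ Y] : Submodule ℝ (BoundedContinuousFunction L Y) where
  carrier := {f | ZeroAtInfty f}
  zero_mem' := by
    intro ε hε
    have h : {t : L | ε ≤ ‖(0 : BoundedContinuousFunction L Y) t‖} = ∅ := by
      ext t
      simp only [BoundedContinuousFunction.coe_zero, Pi.zero_apply, norm_zero,
        Set.mem_setOf_eq, Set.mem_empty_iff_false, iff_false, not_le]
      exact hε
    rw [h]; exact isCompact_empty
  add_mem' := by
    rintro f g hf hg ε hε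
    have h := (hf (ε / 2) (by linarith)).union (hg (ε / 2) (by linarith))
    refine h.of_isClosed_subset (isClosed_le continuous_const ((f + g).continuous.norm)) ?_
    intro t ht
    have ht' : ε ≤ ‖(f + g) t‖ := ht
    by_contra hc
    simp only [Set.mem_union, Set.mem_setOf_eq, not_or, not_le] at hc
    have hb : ‖(f + g) t‖ ≤ ‖f t‖ + ‖g t‖ := by
      rw [BoundedContinuousFunction.add_apply]; exact norm_add_le _ _
    linarith [hc.1, hc.2]
  smul_mem' := by
    rintro c f hf ε hε
    by_cases hc : c = 0
    · subst hc
      have h : {t : L | ε ≤ ‖((0 : ℝ) • f) t‖} = ∅ := by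
        ext t
        simp only [Set.mem_setOf_eq, Set.mem_empty_iff_false, iff_false, not_le]
        rw [BoundedContinuousFunction.coe_smul]
        simpa using hε
      rw [h]; exact isCompact_empty
    · have hcn : (0 : ℝ) < ‖c‖ := norm_pos_iff.mpr hc
      have h := hf (ε / ‖c‖) (by positivity)
      refine h.of_isClosed_subset (isClosed_le continuous_const ((c • f).continuous.norm)) ?_
      intro t ht
      have ht' : ε ≤ ‖(c • f) t‖ := ht
      have heq : ‖(c • f) t‖ = ‖c‖ * ‖f t‖ := by
        rw [BoundedContinuousFunction.coe_smul]; simp [norm_smul]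
      rw [heq] at ht'
      have : ε / ‖c‖ ≤ ‖f t‖ := by
        rw [div_le_iff₀ hcn]; linarith [mul_comm ‖c‖ ‖f t‖]
      exact this

/-- The subspace `E` of `C_b(ℒ, Y)` consisting of the functions `x̂ : T ↦ T x` for `x ∈ X`. -/
def perfektE {X Y ι : Type*} [NormedAddCommGroup X] [NormedSpace ℝ X]
    [NormedAddCommGroup Y] [NormedSpace ℝ Y] [TopologicalSpace ι]
    (T : ι → X →L[ℝ] Y) : Submodule ℝ (BoundedContinuousFunction ι Y) where
  carrier := {f | ∃ x : X, ∀ i, f i = T i x}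
  zero_mem' := ⟨0, fun i => by simp⟩
  add_mem' := by
    rintro f g ⟨x, hx⟩ ⟨y, hy⟩
    exact ⟨x + y, fun i => by simp [hx i, hy i]⟩
  smul_mem' := by
    rintro c f ⟨x, hx⟩
    exact ⟨c • x, fun i => by simp [hx i]⟩

open BoundedContinuousFunction Set in
theorem perfekt_tight {ι Y : Type*} [TopologicalSpace ι] [NormedAddCommGroup Y]
    [NormedSpace ℝ Y] (Φ : ↥(zeroAtInftySubmodule ι Y) →L[ℝ] ℝ) {ε : ℝ} (hε : 0 < ε) :
    ∃ K : Set ι, IsCompact K ∧ ∀ g : ↥(zeroAtInftySubmodule ι Y),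
      (∀ t ∈ K, (g : BoundedContinuousFunction ι Y) t = 0) → |Φ g| ≤ ε * ‖g‖ := by
  by_contra hcon
  push_neg at hcon
  have hsel : ∀ K : Set ι, IsCompact K → ∃ g : ↥(zeroAtInftySubmodule ι Y),
      ‖g‖ ≤ 1 ∧ (∀ t ∈ K, (g : BoundedContinuousFunction ι Y) t = 0) ∧ ε < |Φ g| := by
    intro K hK
    obtain ⟨g, hg0, hg1⟩ := hcon K hK
    have hgpos : 0 < ‖g‖ := by
      rcases (norm_nonneg g).lt_or_eq with h | h
      · exact h
      · exfalso
        have hz : g = 0 := by rw [← norm_eq_zero]; exact h.symm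
        rw [hz] at hg1
        simp at hg1
    refine ⟨‖g‖⁻¹ • g, ?_, ?_, ?_⟩
    · have h1 : ‖(‖g‖⁻¹ • g : ↥(zeroAtInftySubmodule ι Y))‖ = ‖(‖g‖⁻¹ : ℝ)‖ * ‖g‖ :=
        norm_smul _ g
      rw [h1, norm_inv, norm_norm, inv_mul_cancel₀ hgpos.ne']
    · intro t ht
      have h2 : ((‖g‖⁻¹ • g : ↥(zeroAtInftySubmodule ι Y)) : BoundedContinuousFunction ι Y) t
          = ‖g‖⁻¹ • ((g : BoundedContinuousFunction ι Y) t) := rfl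
      rw [h2, hg0 t ht, smul_zero]
    · rw [map_smul, smul_eq_mul, abs_mul, abs_inv, abs_norm]
      calc ε = ε * ‖g‖ * ‖g‖⁻¹ := by rw [mul_assoc, mul_inv_cancel₀ hgpos.ne', mul_one]
        _ < |Φ g| * ‖g‖⁻¹ := mul_lt_mul_of_pos_right hg1 (inv_pos.mpr hgpos)
        _ = ‖g‖⁻¹ * |Φ g| := mul_comm _ _
  -- the gliding hump
  set δ : ℝ := ε / (2 * (‖Φ‖ + 1)) with hδdef
  have hΦ0 : (0:ℝ) ≤ ‖Φ‖ := Φ.opNorm_nonneg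
  have hδ : 0 < δ := by positivity
  -- the recursive sequence of compact sets and functions
  let next : {K : Set ι // IsCompact K} → ↥(zeroAtInftySubmodule ι Y) :=
    fun K => (hsel K.1 K.2).choose
  let step : {K : Set ι // IsCompact K} → {K : Set ι // IsCompact K} := fun K =>
    ⟨K.1 ∪ {t : ι | δ ≤ ‖(next K : BoundedContinuousFunction ι Y) t‖},
      K.2.union ((next K).2 δ hδ)⟩
  let Kseq : ℕ → {K : Set ι // IsCompact K} := fun n => step^[n] ⟨∅, isCompact_empty⟩
  let g : ℕ → ↥(zeroAtInftySubmodule ι Y) := fun n => next (Kseq n)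
  have hKsucc : ∀ n, (Kseq (n+1)).1 =
      (Kseq n).1 ∪ {t : ι | δ ≤ ‖(g n : BoundedContinuousFunction ι Y) t‖} := by
    intro n
    have : Kseq (n+1) = step (Kseq n) := Function.iterate_succ_apply' step n _
    rw [this]
  have hKmono : ∀ m n, m ≤ n → (Kseq m).1 ⊆ (Kseq n).1 := by
    intro m n hmn
    induction n with
    | zero => simp_all
    | succ k ih =>
      rcases Nat.lt_or_ge m (k+1) with h | h
      · have := ih (Nat.lt_succ_iff.mp h)
        rw [hKsucc k]
        exact this.trans subset_union_left
      · have : m = k + 1 := le_antisymm hmn h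
        rw [this]
  have hg1 : ∀ n, ‖g n‖ ≤ 1 := fun n => ((hsel _ (Kseq n).2).choose_spec).1
  have hg0 : ∀ n, ∀ t ∈ (Kseq n).1, (g n : BoundedContinuousFunction ι Y) t = 0 :=
    fun n => ((hsel _ (Kseq n).2).choose_spec).2.1
  have hgΦ : ∀ n, ε < |Φ (g n)| := fun n => ((hsel _ (Kseq n).2).choose_spec).2.2
  -- the signs
  let θ : ℕ → ℝ := fun n => if 0 ≤ Φ (g n) then 1 else -1
  have hθabs : ∀ n, θ n * Φ (g n) = |Φ (g n)| := by
    intro n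
    by_cases h : 0 ≤ Φ (g n)
    · simp [θ, h, abs_of_nonneg h]
    · simp [θ, h, abs_of_neg (lt_of_not_ge h)]
  have hθ1 : ∀ n, |θ n| = 1 := by
    intro n
    by_cases h : 0 ≤ Φ (g n) <;> simp [θ, h]
  -- key estimate for every N
  have key : ∀ N : ℕ, (N : ℝ) * ε ≤ ‖Φ‖ * (1 + N * δ) := by
    intro N
    set h : ↥(zeroAtInftySubmodule ι Y) := ∑ n ∈ Finset.range N, θ n • g n with hh
    have hΦh : (N : ℝ) * ε ≤ Φ h := by
      rw [hh, map_sum]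
      have : ∀ n ∈ Finset.range N, ε ≤ Φ (θ n • g n) := by
        intro n _
        rw [map_smul, smul_eq_mul, hθabs n]
        exact (hgΦ n).le
      calc (N : ℝ) * ε = ∑ _n ∈ Finset.range N, ε := by
            rw [Finset.sum_const, Finset.card_range, nsmul_eq_mul]
        _ ≤ _ := Finset.sum_le_sum this
    -- norm estimate
    have hnorm : ‖h‖ ≤ 1 + N * δ := by
      have hcoe : ((h : BoundedContinuousFunction ι Y)) =
          ∑ n ∈ Finset.range N, θ n • (g n : BoundedContinuousFunction ι Y) := by
        rw [hh]
        push_cast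
        rfl
      have hpt : ∀ t, ‖(h : BoundedContinuousFunction ι Y) t‖ ≤ 1 + N * δ := by
        intro t
        have h1 : ‖(h : BoundedContinuousFunction ι Y) t‖ ≤
            ∑ n ∈ Finset.range N, ‖(g n : BoundedContinuousFunction ι Y) t‖ := by
          rw [hcoe]
          calc ‖(∑ n ∈ Finset.range N, θ n • (g n : BoundedContinuousFunction ι Y)) t‖
              = ‖∑ n ∈ Finset.range N, θ n • (g n : BoundedContinuousFunction ι Y) t‖ := by
                rw [BoundedContinuousFunction.coe_sum]; simp
            _ ≤ ∑ n ∈ Finset.range N, ‖θ n • (g n : BoundedContinuousFunction ι Y) t‖ :=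
                norm_sum_le _ _
            _ = ∑ n ∈ Finset.range N, ‖(g n : BoundedContinuousFunction ι Y) t‖ := by
                refine Finset.sum_congr rfl fun n _ => ?_
                rw [norm_smul, Real.norm_eq_abs, hθ1 n, one_mul]
        by_cases hex : ∃ n, n < N ∧ δ ≤ ‖(g n : BoundedContinuousFunction ι Y) t‖
        · classical
          let m := Nat.find hex
          have hm := Nat.find_spec hex
          have hbound : ∀ n ∈ Finset.range N,
              ‖(g n : BoundedContinuousFunction ι Y) t‖ ≤ δ + (if n = m then 1 else 0) := by
            intro n hn
            rw [Finset.mem_range] at hn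
            by_cases hnm : n = m
            · subst hnm
              rw [if_pos rfl]
              have h2 : ‖(g m : BoundedContinuousFunction ι Y) t‖ ≤ ‖g m‖ :=
                (g m).1.norm_coe_le_norm t
              linarith [hg1 m, hδ.le]
            · simp only [if_neg hnm, add_zero]
              rcases Nat.lt_or_ge n m with h | h
              · have := Nat.find_min hex h
                push_neg at this
                exact (this hn).le
              · have hmn : m < n := lt_of_le_of_ne h (Ne.symm hnm)
                have ht' : t ∈ (Kseq n).1 := by
                  apply hKmono (m+1) n hmn
                  rw [hKsucc m]
                  exact Or.inr hm.2
                rw [hg0 n t ht', norm_zero]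
                exact hδ.le
          calc ‖(h : BoundedContinuousFunction ι Y) t‖
              ≤ ∑ n ∈ Finset.range N, ‖(g n : BoundedContinuousFunction ι Y) t‖ := h1
            _ ≤ ∑ n ∈ Finset.range N, (δ + if n = m then 1 else 0) :=
                Finset.sum_le_sum hbound
            _ = N * δ + ∑ n ∈ Finset.range N, (if n = m then (1:ℝ) else 0) := by
                rw [Finset.sum_add_distrib, Finset.sum_const, Finset.card_range, nsmul_eq_mul]
            _ ≤ N * δ + 1 := by
                gcongr
                rw [Finset.sum_ite_eq' (Finset.range N) m (fun _ => (1:ℝ))]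
                split <;> norm_num
            _ = 1 + N * δ := by ring
        · push_neg at hex
          calc ‖(h : BoundedContinuousFunction ι Y) t‖
              ≤ ∑ n ∈ Finset.range N, ‖(g n : BoundedContinuousFunction ι Y) t‖ := h1
            _ ≤ ∑ _n ∈ Finset.range N, δ := by
                refine Finset.sum_le_sum fun n hn => ?_
                rw [Finset.mem_range] at hn
                exact (hex n hn).le
            _ = N * δ := by rw [Finset.sum_const, Finset.card_range, nsmul_eq_mul]
            _ ≤ 1 + N * δ := by linarith
      exact (BoundedContinuousFunction.norm_le (by positivity)).mpr hpt
    calc (N : ℝ) * ε ≤ Φ h := hΦh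
      _ ≤ |Φ h| := le_abs_self _
      _ ≤ ‖Φ‖ * ‖h‖ := Φ.le_opNorm h
      _ ≤ ‖Φ‖ * (1 + N * δ) := by
          exact mul_le_mul_of_nonneg_left hnorm hΦ0
  -- contradiction for large N
  obtain ⟨N, hN⟩ := exists_nat_gt ((2 * ‖Φ‖ + 2) / ε)
  have hkey := key N
  have hδΦ : ‖Φ‖ * δ ≤ ε / 2 := by
    rw [hδdef, ← mul_div_assoc, div_le_div_iff₀ (by positivity) (by norm_num)]
    nlinarith [hΦ0, hε]
  have h1 : (N : ℝ) * ε ≤ ‖Φ‖ + N * (ε / 2) := by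
    calc (N : ℝ) * ε ≤ ‖Φ‖ * (1 + N * δ) := hkey
      _ = ‖Φ‖ + N * (‖Φ‖ * δ) := by ring
      _ ≤ ‖Φ‖ + N * (ε / 2) := by gcongr
  have hNε : (2 * ‖Φ‖ + 2) / ε < N := hN
  rw [div_lt_iff₀ hε] at hNε
  nlinarith [Nat.cast_nonneg (α := ℝ) N]

section Perfekt

variable {X Y ι : Type*}
  [NormedAddCommGroup X] [NormedSpace ℝ X] [CompleteSpace X]
  [NormedAddCommGroup Y] [NormedSpace ℝ Y] [CompleteSpace Y]
  [TopologicalSpace ι] [LocallyCompactSpace ι] [T2Space ι]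

set_option maxHeartbeats 2000000 in
/-- In the Perfekt setup, the restriction operator `J : X* → E₀*` is a well-defined bounded
linear operator with dense range. -/
theorem perfekt_restriction_denseRange
    (T : ι → X →L[ℝ] Y) (hTinj : Function.Injective T)
    (hTcont : ∀ x : X, Continuous fun i => T i x)
    (hrefl : Function.Surjective (NormedSpace.inclusionInDoubleDual ℝ X))
    (hsep : ∀ x : X, (∃ C : ℝ, ∀ i, ‖T i x‖ ≤ C) → (∀ i, T i x = 0) → x = 0)
    (hclosed : IsClosed ((perfektE T : Set (BoundedContinuousFunction ι Y)))) :
    ∃ J : (X →L[ℝ] ℝ) →L[ℝ]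
        (↥(perfektE T ⊓ zeroAtInftySubmodule ι Y) →L[ℝ] ℝ),
      (∀ (x' : X →L[ℝ] ℝ) (f : ↥(perfektE T ⊓ zeroAtInftySubmodule ι Y)) (x : X),
          (∀ i, (f : BoundedContinuousFunction ι Y) i = T i x) → J x' f = x' x) ∧
      DenseRange ⇑J := by
  classical
  -- uniqueness of the representing vector
  have huniq : ∀ (f : BoundedContinuousFunction ι Y) (x y : X),
      (∀ i, f i = T i x) → (∀ i, f i = T i y) → x = y := by
    intro f x y hx hy
    have h0 : ∀ i, T i (x - y) = 0 := by
      intro i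
      rw [map_sub, ← hx i, ← hy i, sub_self]
    have := hsep (x - y) ⟨0, fun i => by rw [h0 i, norm_zero]⟩ h0
    exact sub_eq_zero.mp this
  -- the representing vector of an element of `E`
  have hmem : ∀ f : ↥(perfektE T), ∃ x : X,
      ∀ i, (f : BoundedContinuousFunction ι Y) i = T i x := fun f => f.2
  let xof : ↥(perfektE T) → X := fun f => (hmem f).choose
  have hxof : ∀ (f : ↥(perfektE T)) (i : ι),
      (f : BoundedContinuousFunction ι Y) i = T i (xof f) := fun f => (hmem f).choose_spec
  -- `xof` is linear
  let Ψ : ↥(perfektE T) →ₗ[ℝ] X :=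
    { toFun := xof
      map_add' := by
        intro f g
        refine huniq ((f : BoundedContinuousFunction ι Y) + g) _ _ (hxof (f + g)) ?_
        intro i
        simp only [BoundedContinuousFunction.add_apply, map_add]
        rw [← hxof f i, ← hxof g i]
      map_smul' := by
        intro c f
        refine huniq (c • (f : BoundedContinuousFunction ι Y)) _ _ (hxof (c • f)) ?_
        intro i
        simp only [BoundedContinuousFunction.coe_smul, map_smul, RingHom.id_apply]
        rw [← hxof f i] }
  -- closed graph
  haveI : CompleteSpace ↥(perfektE T) := hclosed.completeSpace_coe
  have hgraph : IsClosed (Ψ.graph : Set (↥(perfektE T) × X)) := by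
    have heq : (Ψ.graph : Set (↥(perfektE T) × X)) =
        ⋂ i : ι, {p : ↥(perfektE T) × X |
          (p.1 : BoundedContinuousFunction ι Y) i = T i p.2} := by
      ext p
      simp only [SetLike.mem_coe, LinearMap.mem_graph_iff, Set.mem_iInter, Set.mem_setOf_eq]
      constructor
      · intro h i
        rw [h]
        exact hxof p.1 i
      · intro h
        exact (huniq (p.1 : BoundedContinuousFunction ι Y) _ _ (hxof p.1) h).symm
    rw [heq]
    refine isClosed_iInter fun i => isClosed_eq ?_ ?_
    · exact (continuous_eval_const i).comp
        (continuous_subtype_val.comp continuous_fst)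
    · exact (T i).continuous.comp continuous_snd
  have hΨcont : Continuous Ψ := Ψ.continuous_of_isClosed_graph hgraph
  let Φ'' : ↥(perfektE T) →L[ℝ] X := ⟨Ψ, hΨcont⟩
  -- the inclusion `E₀ → E`
  let inclCLM : ↥(perfektE T ⊓ zeroAtInftySubmodule ι Y) →L[ℝ] ↥(perfektE T) :=
    LinearMap.mkContinuous (Submodule.inclusion inf_le_left) 1
      (fun f => by rw [one_mul]; exact le_of_eq rfl)
  let Φ₀ : ↥(perfektE T ⊓ zeroAtInftySubmodule ι Y) →L[ℝ] X := Φ''.comp inclCLM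
  have hΦ₀ : ∀ (f : ↥(perfektE T ⊓ zeroAtInftySubmodule ι Y)) (i : ι),
      (f : BoundedContinuousFunction ι Y) i = T i (Φ₀ f) := by
    intro f i
    exact hxof (Submodule.inclusion inf_le_left f) i
  have hΦ₀x : ∀ (f : ↥(perfektE T ⊓ zeroAtInftySubmodule ι Y)) (x : X),
      (∀ i, (f : BoundedContinuousFunction ι Y) i = T i x) → Φ₀ f = x := by
    intro f x hx
    exact huniq (f : BoundedContinuousFunction ι Y) _ _ (hΦ₀ f) hx
  -- the operator J
  let J : (X →L[ℝ] ℝ) →L[ℝ] (↥(perfektE T ⊓ zeroAtInftySubmodule ι Y) →L[ℝ] ℝ) :=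
    (ContinuousLinearMap.compL ℝ (↥(perfektE T ⊓ zeroAtInftySubmodule ι Y)) X ℝ).flip Φ₀
  have hJ : ∀ (x' : X →L[ℝ] ℝ) (f : ↥(perfektE T ⊓ zeroAtInftySubmodule ι Y)),
      J x' f = x' (Φ₀ f) := fun x' f => rfl
  refine ⟨J, fun x' f x hx => by rw [hJ, hΦ₀x f x hx], ?_⟩
  -- density of the range
  refine (Metric.denseRange_iff (f := ⇑J)).mpr ?_
  intro φ r hr
  -- extend `φ` to a functional `Φ` on all of `C₀(ι, Y)` by Hahn–Banach
  let p : Submodule ℝ ↥(zeroAtInftySubmodule ι Y) :=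
    (perfektE T ⊓ zeroAtInftySubmodule ι Y).comap (zeroAtInftySubmodule ι Y).subtype
  let e : ↥p →L[ℝ] ↥(perfektE T ⊓ zeroAtInftySubmodule ι Y) :=
    ContinuousLinearMap.codRestrict ((zeroAtInftySubmodule ι Y).subtypeL.comp p.subtypeL)
      (perfektE T ⊓ zeroAtInftySubmodule ι Y) (fun gq => Submodule.mem_comap.mp gq.2)
  obtain ⟨Φ, hΦext, -⟩ := exists_extension_norm_eq p (φ.comp e)
  -- `Φ` is concentrated near a compact set `K`, up to `r / 2`
  obtain ⟨K, hKcomp, hKtight⟩ := perfekt_tight Φ (show (0:ℝ) < r/2 by positivity)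
  -- a Urysohn function for `K`
  obtain ⟨χ, hχ1, -, hχc, hχ01⟩ :=
    exists_continuous_one_zero_of_isCompact hKcomp isClosed_empty (Set.disjoint_empty K)
  -- uniform bound for `T` on the support of `χ` (Banach–Steinhaus)
  have hSb : ∀ x : X, ∃ C, ∀ t : (tsupport ⇑χ), ‖T t.1 x‖ ≤ C := by
    intro x
    obtain ⟨C, hC⟩ := hχc.exists_bound_of_continuousOn (hTcont x).continuousOn
    exact ⟨C, fun t => hC t.1 t.2⟩
  obtain ⟨M', hM'⟩ := banach_steinhaus (g := fun t : (tsupport ⇑χ) => T t.1) hSb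
  set M := max M' 0 with hM
  have hM0 : (0:ℝ) ≤ M := le_max_right _ _
  have hMt : ∀ t ∈ tsupport ⇑χ, ‖T t‖ ≤ M := fun t ht => (hM' ⟨t, ht⟩).trans (le_max_left _ _)
  -- the truncated functions `t ↦ χ t • T t x`
  have hbd : ∀ (x : X) (t : ι), ‖χ t • T t x‖ ≤ M * ‖x‖ := by
    intro x t
    by_cases ht : t ∈ tsupport ⇑χ
    · rw [norm_smul, Real.norm_eq_abs, abs_of_nonneg (hχ01 t).1]
      calc χ t * ‖T t x‖ ≤ 1 * (M * ‖x‖) := by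
            refine mul_le_mul (hχ01 t).2 ?_ (norm_nonneg _) zero_le_one
            exact ((T t).le_opNorm x).trans
              (mul_le_mul_of_nonneg_right (hMt t ht) (norm_nonneg x))
        _ = M * ‖x‖ := one_mul _
    · rw [image_eq_zero_of_notMem_tsupport ht, zero_smul, norm_zero]
      positivity
  let bcf : X → BoundedContinuousFunction ι Y := fun x =>
    BoundedContinuousFunction.ofNormedAddCommGroup (fun t => χ t • T t x)
      (χ.continuous.smul (hTcont x)) (M * ‖x‖) (hbd x)
  have hbcfmem : ∀ x : X, bcf x ∈ zeroAtInftySubmodule ι Y := by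
    intro x
    show ZeroAtInfty (bcf x)
    intro η hη
    refine IsCompact.of_isClosed_subset hχc
      (isClosed_le continuous_const (bcf x).continuous.norm) ?_
    intro t ht
    by_contra hts
    have hz : (bcf x) t = 0 := by
      show χ t • T t x = 0
      rw [image_eq_zero_of_notMem_tsupport hts, zero_smul]
    rw [Set.mem_setOf_eq, hz, norm_zero] at ht
    exact absurd ht (not_le.mpr hη)
  have hbcfnorm : ∀ x : X, ‖bcf x‖ ≤ M * ‖x‖ := by
    intro x
    refine (BoundedContinuousFunction.norm_le (by positivity)).mpr ?_
    exact hbd x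
  -- the approximating functional `x'`
  let xlin : X →ₗ[ℝ] ℝ :=
    { toFun := fun x => Φ ⟨bcf x, hbcfmem x⟩
      map_add' := by
        intro a b
        show Φ ⟨bcf (a + b), hbcfmem _⟩ = Φ ⟨bcf a, hbcfmem a⟩ + Φ ⟨bcf b, hbcfmem b⟩
        rw [← map_add]
        refine congrArg Φ (Subtype.ext ?_)
        ext t
        show χ t • T t (a + b) = χ t • T t a + χ t • T t b
        rw [map_add, smul_add]
      map_smul' := by
        intro c a
        show Φ ⟨bcf (c • a), hbcfmem _⟩ = c • Φ ⟨bcf a, hbcfmem a⟩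
        rw [← map_smul]
        refine congrArg Φ (Subtype.ext ?_)
        ext t
        show χ t • T t (c • a) = c • (χ t • T t a)
        rw [map_smul, smul_comm] }
  have hxlinb : ∀ x : X, ‖xlin x‖ ≤ (‖Φ‖ * M) * ‖x‖ := by
    intro x
    calc ‖xlin x‖ ≤ ‖Φ‖ * ‖(⟨bcf x, hbcfmem x⟩ : ↥(zeroAtInftySubmodule ι Y))‖ :=
          Φ.le_opNorm _
      _ ≤ ‖Φ‖ * (M * ‖x‖) := by
          refine mul_le_mul_of_nonneg_left ?_ Φ.opNorm_nonneg
          exact hbcfnorm x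
      _ = (‖Φ‖ * M) * ‖x‖ := by ring
  let x' : X →L[ℝ] ℝ := LinearMap.mkContinuous xlin (‖Φ‖ * M) hxlinb
  refine ⟨x', ?_⟩
  have hdist : dist φ (J x') = ‖φ - J x'‖ :=
    dist_eq_norm (E := ↥(perfektE T ⊓ zeroAtInftySubmodule ι Y) →L[ℝ] ℝ) φ (J x')
  have hb : ‖φ - J x'‖ ≤ r / 2 := by
    refine ContinuousLinearMap.opNorm_le_bound _ (by positivity) ?_
    intro f
    set x := Φ₀ f with hxdef
    have hfx : ∀ i, (f : BoundedContinuousFunction ι Y) i = T i x := hΦ₀ f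
    have hfN : (f : BoundedContinuousFunction ι Y) ∈ zeroAtInftySubmodule ι Y :=
      (Submodule.mem_inf.mp f.2).2
    let fN : ↥(zeroAtInftySubmodule ι Y) := ⟨(f : BoundedContinuousFunction ι Y), hfN⟩
    have hfp : fN ∈ p := Submodule.mem_comap.mpr f.2
    have hΦf : Φ fN = φ f := by
      calc Φ fN = φ (e ⟨fN, hfp⟩) := hΦext ⟨fN, hfp⟩
        _ = φ f := by congr 1
    have hxmem := hbcfmem x
    have hdiff : ∀ t ∈ K,
        ((fN - ⟨bcf x, hxmem⟩ : ↥(zeroAtInftySubmodule ι Y)) :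
          BoundedContinuousFunction ι Y) t = 0 := by
      intro t ht
      show (f : BoundedContinuousFunction ι Y) t - χ t • T t x = 0
      rw [hfx t, show χ t = 1 from hχ1 ht, one_smul, sub_self]
    have hdn : ‖(fN - ⟨bcf x, hxmem⟩ : ↥(zeroAtInftySubmodule ι Y))‖ ≤ ‖f‖ := by
      show ‖((fN - ⟨bcf x, hxmem⟩ : ↥(zeroAtInftySubmodule ι Y)) :
        BoundedContinuousFunction ι Y)‖ ≤ ‖f‖
      refine (BoundedContinuousFunction.norm_le (norm_nonneg f)).mpr ?_
      intro t
      show ‖(f : BoundedContinuousFunction ι Y) t - χ t • T t x‖ ≤ ‖f‖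
      rw [hfx t]
      have h2 : T t x - χ t • T t x = (1 - χ t) • T t x := by rw [sub_smul, one_smul]
      rw [h2, norm_smul, Real.norm_eq_abs, abs_of_nonneg (by linarith [(hχ01 t).2])]
      calc (1 - χ t) * ‖T t x‖ ≤ 1 * ‖T t x‖ := by
            refine mul_le_mul_of_nonneg_right ?_ (norm_nonneg _)
            linarith [(hχ01 t).1]
        _ = ‖T t x‖ := one_mul _
        _ = ‖(f : BoundedContinuousFunction ι Y) t‖ := by rw [hfx t]
        _ ≤ ‖(f : BoundedContinuousFunction ι Y)‖ :=
            (f : BoundedContinuousFunction ι Y).norm_coe_le_norm t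
    have hsmall := hKtight _ hdiff
    have heval : (φ - J x') f = Φ (fN - ⟨bcf x, hxmem⟩) := by
      rw [ContinuousLinearMap.sub_apply, map_sub, hΦf, hJ]
      congr 1
    calc ‖(φ - J x') f‖ = |Φ (fN - ⟨bcf x, hxmem⟩)| := by
          rw [heval, Real.norm_eq_abs]
      _ ≤ (r / 2) * ‖(fN - ⟨bcf x, hxmem⟩ : ↥(zeroAtInftySubmodule ι Y))‖ := hsmall
      _ ≤ (r / 2) * ‖f‖ := by gcongr
  rw [hdist]
  exact lt_of_le_of_lt hb (by linarith)

end Perfekt
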